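/- arXiv:1803.04025 — 2 statements merged into one kernel-verified Lean document; each statement's English description precedes it below -/
import Mathlib

section
/- Let G' be constructed from a directed graph G (with vertex set V, distinguished vertices s,t) and integer m as follows: vertices of G' are pairs (i,v) for 0 ≤ i ≤ m, v ∈ V; edges (i,u) → (i+1,v) for each edge u → v of G and 0 ≤ i ≤ m−1; edges (m,v) → (0,s) for v ≠ t; and a self-loop at (m,t). If a random walk of length m from s in G reaches t with probability at least q, then a random walk of length m + (m+1)·r from (0,s) in G' is at (m,t) at the final step with probability at least 1 − (1−q)^r. -/
open scoped ENNReal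

/-- The distribution of the endpoint of a random walk of the given length, where each
step moves according to the kernel `step`. -/
noncomputable def walkPMF {V : Type*} (step : V → PMF V) : V → ℕ → PMF V
  | v, 0 => PMF.pure v
  | v, n + 1 => (step v).bind fun u => walkPMF step u n

/-- The step distribution of a random walk: move to a uniformly random out-neighbor. -/
noncomputable def uniformStep {V : Type*} (N : V → Finset V) (h : ∀ v, (N v).Nonempty) :
    V → PMF V :=
  fun v => PMF.uniformOfFinset (N v) (h v)

/-- The out-neighbor structure of the layered graph `G'` built from `G` (given by
out-neighbors `N`), vertices `s`, `t`, and parameter `m`: edges `(i,u) → (i+1,v)` for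
each edge `u → v` of `G` and `i < m`; edges `(m,v) → (0,s)` for `v ≠ t`; and a
self-loop at `(m,t)`. -/
def layeredN {V : Type*} [DecidableEq V] (m : ℕ) (N : V → Finset V) (s t : V)
    (p : Fin (m + 1) × V) : Finset (Fin (m + 1) × V) :=
  if h : (p.1 : ℕ) < m then
    (N p.2).image fun v => (⟨(p.1 : ℕ) + 1, by omega⟩, v)
  else if p.2 = t then {p} else {(⟨0, by omega⟩, s)}

lemma walkPMF_add {V : Type*} (step : V → PMF V) (v : V) (a b : ℕ) :
    walkPMF step v (a + b) = (walkPMF step v a).bind fun u => walkPMF step u b := by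
  induction a generalizing v with
  | zero => simp [walkPMF]
  | succ n ih =>
    have : n + 1 + b = (n + b) + 1 := by omega
    rw [this]
    show (step v).bind (fun u => walkPMF step u (n + b)) = _
    simp only [ih]
    rw [show walkPMF step v (n+1) = (step v).bind (fun u => walkPMF step u n) from rfl,
      PMF.bind_bind]

lemma uniformOfFinset_singleton {α : Type*} (a : α) (h : ({a} : Finset α).Nonempty) :
    PMF.uniformOfFinset {a} h = PMF.pure a := by
  ext b
  rw [PMF.uniformOfFinset_apply, PMF.pure_apply]
  by_cases hb : b = a <;> simp [hb]

lemma uniformOfFinset_image {α β : Type*} [DecidableEq β] (f : α → β)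
    (hf : Function.Injective f) (s : Finset α) (hs : s.Nonempty) (hs' : (s.image f).Nonempty) :
    PMF.uniformOfFinset (s.image f) hs' = (PMF.uniformOfFinset s hs).map f := by
  ext b
  rw [PMF.map_apply, PMF.uniformOfFinset_apply]
  by_cases hb : b ∈ s.image f
  · obtain ⟨a, ha, rfl⟩ := Finset.mem_image.1 hb
    rw [if_pos hb]
    refine Eq.symm ((tsum_eq_single a fun a' ha' => if_neg fun h => ha' (hf h).symm).trans ?_)
    rw [if_pos rfl, PMF.uniformOfFinset_apply, if_pos ha,
      Finset.card_image_of_injective _ hf]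
  · rw [if_neg hb]
    refine Eq.symm <| ENNReal.summable.tsum_eq_zero_iff.2 fun a => ?_
    by_cases h : b = f a
    · subst h
      rw [if_pos rfl, PMF.uniformOfFinset_apply,
        if_neg fun ha => hb (Finset.mem_image_of_mem f ha)]
    · rw [if_neg h]

section Layered

variable {V : Type*} [DecidableEq V] (N : V → Finset V) (hN : ∀ v, (N v).Nonempty)
  (s t : V) (m : ℕ) (hNE : ∀ p, (layeredN m N s t p).Nonempty)

lemma step'_lt (i : ℕ) (hi : i < m) (v : V) :
    uniformStep (layeredN m N s t) hNE (⟨i, by omega⟩, v)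
      = (uniformStep N hN v).map (fun u => (⟨i + 1, by omega⟩, u)) := by
  have hinj : Function.Injective (fun u : V => ((⟨i + 1, by omega⟩ : Fin (m+1)), u)) :=
    fun a b h => (Prod.mk.injEq _ _ _ _ ▸ h).2
  simp only [uniformStep, layeredN, dif_pos hi]
  exact uniformOfFinset_image _ hinj (N v) (hN v) _

lemma step'_self : uniformStep (layeredN m N s t) hNE (⟨m, by omega⟩, t)
    = PMF.pure (⟨m, by omega⟩, t) := by
  simp only [uniformStep, layeredN, dif_neg (lt_irrefl m), if_pos rfl]
  exact uniformOfFinset_singleton _ _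

lemma step'_reset (v : V) (hv : v ≠ t) :
    uniformStep (layeredN m N s t) hNE (⟨m, by omega⟩, v)
      = PMF.pure (⟨0, by omega⟩, s) := by
  simp only [uniformStep, layeredN, dif_neg (lt_irrefl m), if_neg hv]
  exact uniformOfFinset_singleton _ _

lemma walk'_loop (n : ℕ) :
    walkPMF (uniformStep (layeredN m N s t) hNE) (⟨m, by omega⟩, t) n
      = PMF.pure (⟨m, by omega⟩, t) := by
  induction n with
  | zero => rfl
  | succ k ih =>
    show (uniformStep (layeredN m N s t) hNE (⟨m, by omega⟩, t)).bind _ = _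
    rw [step'_self N s t m hNE, PMF.pure_bind, ih]

lemma walk'_lift (n : ℕ) : ∀ (i : ℕ) (h : i + n ≤ m) (v : V),
    walkPMF (uniformStep (layeredN m N s t) hNE) (⟨i, by omega⟩, v) n
      = (walkPMF (uniformStep N hN) v n).map (fun u => (⟨i + n, by omega⟩, u)) := by
  induction n with
  | zero =>
    intro i h v
    show PMF.pure _ = _
    rw [show walkPMF (uniformStep N hN) v 0 = PMF.pure v from rfl, PMF.pure_map]
    rfl
  | succ k ih =>
    intro i h v
    show (uniformStep (layeredN m N s t) hNE (⟨i, by omega⟩, v)).bind _ = _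
    rw [step'_lt N hN s t m hNE i (by omega) v, PMF.bind_map]
    show (uniformStep N hN v).bind
        (fun u => walkPMF (uniformStep (layeredN m N s t) hNE) (⟨i + 1, by omega⟩, u) k) = _
    have : ∀ u, walkPMF (uniformStep (layeredN m N s t) hNE) (⟨i + 1, by omega⟩, u) k
        = (walkPMF (uniformStep N hN) u k).map
            (fun w => (⟨i + (k + 1), by omega⟩, w)) := by
      intro u
      have hfin : ((⟨i + 1 + k, by omega⟩ : Fin (m + 1))) = ⟨i + (k + 1), by omega⟩ :=
        by simp only [Fin.mk.injEq]; omega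
      rw [ih (i + 1) (by omega) u, hfin]
    simp only [this]
    rw [show walkPMF (uniformStep N hN) v (k + 1)
        = (uniformStep N hN v).bind (fun u => walkPMF (uniformStep N hN) u k) from rfl,
      PMF.map_bind]

lemma walk'_from_start {V : Type*} [DecidableEq V] (N : V → Finset V)
    (hN : ∀ v, (N v).Nonempty) (s t : V) (m : ℕ)
    (hNE : ∀ p, (layeredN m N s t p).Nonempty) :
    walkPMF (uniformStep (layeredN m N s t) hNE) (⟨0, Nat.succ_pos m⟩, s) m
      = (walkPMF (uniformStep N hN) s m).map
          (fun u => (⟨m, Nat.lt_succ_self m⟩, u)) := by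
  have hf : (⟨0 + m, by omega⟩ : Fin (m + 1)) = ⟨m, Nat.lt_succ_self m⟩ := by
    simp only [Fin.mk.injEq]; omega
  rw [walk'_lift N hN s t m hNE m 0 (by omega) s, hf]

end Layered

/-- If a random walk of length `m` from `s` in `G` ends at `t` with probability at
least `q`, then a random walk of length `m + (m+1)·r` from `(0,s)` in the layered
graph `G'` is at `(m,t)` at the final step with probability at least `1 − (1−q)^r`. -/
theorem layered_graph_amplification {V : Type*} [DecidableEq V]
    (N : V → Finset V) (hN : ∀ v, (N v).Nonempty) (s t : V) (m : ℕ)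
    (hNE : ∀ p, (layeredN m N s t p).Nonempty)
    (q : ℝ≥0∞) (hq : q ≤ 1)
    (hhit : q ≤ walkPMF (uniformStep N hN) s m t)
    (r : ℕ) :
    1 - (1 - q) ^ r
      ≤ walkPMF (uniformStep (layeredN m N s t) hNE)
          (⟨0, Nat.succ_pos m⟩, s) (m + (m + 1) * r)
          (⟨m, Nat.lt_succ_self m⟩, t) := by
  set S' := uniformStep (layeredN m N s t) hNE with hS'
  set W := walkPMF (uniformStep N hN) with hW
  set fin : Fin (m + 1) × V := (⟨m, Nat.lt_succ_self m⟩, t) with hfin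
  set start : Fin (m + 1) × V := (⟨0, Nat.succ_pos m⟩, s) with hstart
  have hloop : ∀ n, walkPMF S' fin n fin = 1 := by
    intro n
    rw [hfin, hS', walk'_loop N s t m hNE n]
    exact PMF.pure_apply_self _
  by_cases hdeg : fin = start
  · rw [← hdeg]
    exact le_trans tsub_le_self (le_of_eq (hloop _).symm)
  -- main case
  set p := W s m t with hp
  have hqp : q ≤ p := hhit
  have hp1 : p ≤ 1 := PMF.coe_le_one _ _
  have hw1 : ∀ x, walkPMF S' x 1 = S' x := by
    intro x
    show (S' x).bind (fun u => walkPMF S' u 0) = S' x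
    exact PMF.bind_pure _
  have hnu : walkPMF S' start (m + 1)
      = (W s m).bind (fun u => S' (⟨m, Nat.lt_succ_self m⟩, u)) := by
    rw [walkPMF_add S' start m 1, hstart, hS',
      walk'_from_start N hN s t m hNE, PMF.bind_map]
    congr 1
    funext u
    exact hw1 _
  have hfin1 : S' (⟨m, Nat.lt_succ_self m⟩, t) fin = 1 := by
    rw [hS', step'_self N s t m hNE]
    exact PMF.pure_apply_self _
  have hnu_fin : p ≤ walkPMF S' start (m + 1) fin := by
    rw [hnu, PMF.bind_apply]
    refine le_trans ?_ (ENNReal.le_tsum t)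
    rw [hfin1, mul_one]
  have hnu_start : 1 - p ≤ walkPMF S' start (m + 1) start := by
    rw [hnu, PMF.bind_apply]
    have hle : ∀ u : V, (if u = t then 0 else W s m u)
        ≤ W s m u * S' (⟨m, Nat.lt_succ_self m⟩, u) start := by
      intro u
      by_cases hu : u = t
      · rw [if_pos hu]; exact zero_le
      · rw [if_neg hu, hS', step'_reset N s t m hNE u hu]
        have hpure : PMF.pure ((⟨0, by omega⟩ : Fin (m + 1)), s) start = 1 :=
          PMF.pure_apply_self _
        rw [hpure, mul_one]
    refine le_trans ?_ (ENNReal.tsum_le_tsum hle)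
    have h1 := ENNReal.tsum_eq_add_tsum_ite (f := fun u => W s m u) t
    rw [PMF.tsum_coe] at h1
    rw [tsub_le_iff_right, hp]
    have h2 : (∑' (x : V), @ite ℝ≥0∞ (x = t) (Classical.propDecidable _) 0 (W s m x))
        = ∑' (x : V), if x = t then 0 else W s m x := tsum_congr fun x => by congr
    rw [← h2, add_comm]
    exact le_of_eq h1
  have main : ∀ k, 1 - walkPMF S' start (m + (m + 1) * k) fin ≤ (1 - q) ^ k := by
    intro k
    induction k with
    | zero => simpa using tsub_le_self
    | succ k ih =>
      have hsplit : m + (m + 1) * (k + 1) = (m + 1) + (m + (m + 1) * k) := by ring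
      rw [hsplit, walkPMF_add S' start (m + 1) (m + (m + 1) * k)]
      set A := walkPMF S' start (m + (m + 1) * k) fin with hA
      have hstep : p + (1 - p) * A
          ≤ ((walkPMF S' start (m + 1)).bind
              fun u => walkPMF S' u (m + (m + 1) * k)) fin := by
        rw [PMF.bind_apply]
        refine le_trans ?_ (ENNReal.sum_le_tsum {fin, start})
        rw [Finset.sum_pair hdeg, hloop, ← hA]
        exact add_le_add (by rw [mul_one]; exact hnu_fin)
          (mul_le_mul' hnu_start le_rfl)
      refine le_trans (tsub_le_tsub_left hstep 1) ?_
      rw [← tsub_tsub]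
      have h5 : 1 - p - (1 - p) * A ≤ (1 - p) * (1 - A) := by
        rw [tsub_le_iff_right]
        calc 1 - p = (1 - p) * 1 := (mul_one _).symm
          _ ≤ (1 - p) * ((1 - A) + A) := by
              refine mul_le_mul' le_rfl ?_
              rw [tsub_add_cancel_of_le (PMF.coe_le_one _ _)]
          _ = (1 - p) * (1 - A) + (1 - p) * A := mul_add _ _ _
      refine h5.trans ?_
      calc (1 - p) * (1 - A) ≤ (1 - q) * (1 - q) ^ k :=
            mul_le_mul' (tsub_le_tsub_left hqp 1) ih
        _ = (1 - q) ^ (k + 1) := by rw [pow_succ, mul_comm]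
  have hmr := main r
  rw [tsub_le_iff_right] at hmr ⊢
  exact hmr.trans (le_of_eq (add_comm _ _))
end

section
/- In Algorithm for undirected connectivity: let G be a finite undirected graph with vertices labeled 1..n, and for a vertex v and target w define the destination sequence of v as (t, c₁, ..., c_i), where c_{j+1} is the least label k such that deleting vertices {1,...,k} \ {v, c_j} disconnects v from c_j but deleting {1,...,k−1} \ {v, c_j} does not. Then if u' is the vertex the algorithm moves to from u (u' adjacent to u and u' equals the last entry of u's destination sequence), the destination sequence of u' is strictly greater than that of u in the order where sequences agreeing on a prefix compare by prefix-deletion-or-larger-next-entry; consequently the algorithm never visits the same vertex twice. -/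
/-- Reachability in the subgraph of `G` induced on the vertex set `S`. -/
def ReachIn {n : ℕ} (G : SimpleGraph (Fin n)) (S : Set (Fin n)) (v w : Fin n) : Prop :=
  Relation.ReflTransGen (fun a b => G.Adj a b ∧ a ∈ S ∧ b ∈ S) v w

/-- Deleting the vertices with labels `≤ k`, except for `v` and `w` themselves,
disconnects `v` from `w`. -/
def Separates {n : ℕ} (G : SimpleGraph (Fin n)) (v w k : Fin n) : Prop :=
  ¬ ReachIn G {x | x = v ∨ x = w ∨ k < x} v w

/-- `k` is the least threshold whose deletion separates `v` from `w`: deleting labels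
up to `k` (keeping `v, w`) disconnects `v` from `w`, but no smaller threshold does. -/
def IsStep {n : ℕ} (G : SimpleGraph (Fin n)) (v w k : Fin n) : Prop :=
  Separates G v w k ∧ ∀ k' < k, ¬ Separates G v w k'

/-- `L` is the destination sequence of `v` (with global target `t`): `L` starts at
`t`, each entry is followed by the minimal separating threshold for `v` and that
entry, `v` is not adjacent to any entry except the last, and `v` is adjacent to the
last entry (which is the vertex the algorithm moves to). -/
def IsDestSeq {n : ℕ} (G : SimpleGraph (Fin n)) (t v : Fin n) (L : List (Fin n)) : Prop :=
  (∃ rest, L = t :: rest ∧ List.Chain (IsStep G v) t rest) ∧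
  (∀ u' ∈ L.dropLast, ¬ G.Adj v u') ∧
  (∀ u', L.getLast? = some u' → G.Adj v u')

/-- `SeqGT C D` means sequence `C` is greater than `D`: either `C` is a proper prefix
of `D`, or at the first index where they differ, `C` has the larger entry. -/
def SeqGT {α : Type*} [LT α] (C D : List α) : Prop :=
  (C <+: D ∧ C ≠ D) ∨ ∃ (p : List α) (a b : α), b < a ∧ (p ++ [a]) <+: C ∧ (p ++ [b]) <+: D

section Lemmas
variable {n : ℕ} {G : SimpleGraph (Fin n)}

theorem reach_mono {S T : Set (Fin n)} (h : S ⊆ T) {v w : Fin n} (hr : ReachIn G S v w) :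
    ReachIn G T v w :=
  Relation.ReflTransGen.mono (r := fun a b => G.Adj a b ∧ a ∈ S ∧ b ∈ S)
    (p := fun a b => G.Adj a b ∧ a ∈ T ∧ b ∈ T) (fun _ _ hab => ⟨hab.1, h hab.2.1, h hab.2.2⟩) _ _ hr

theorem reach_symm {S : Set (Fin n)} {v w : Fin n} (hr : ReachIn G S v w) : ReachIn G S w v := by
  have : Std.Symm (fun a b : Fin n => G.Adj a b ∧ a ∈ S ∧ b ∈ S) :=
    ⟨fun _ _ hab => ⟨hab.1.symm, hab.2.2, hab.2.1⟩⟩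
  exact Std.Symm.symm (r := Relation.ReflTransGen _) _ _ hr

theorem reach_mem {S : Set (Fin n)} {v w : Fin n} (hr : ReachIn G S v w) (hv : v ∈ S) : w ∈ S := by
  induction hr with
  | refl => exact hv
  | tail _ h _ => exact h.2.2

theorem sep_mono {v w k k' : Fin n} (hkk : k ≤ k') (h : Separates G v w k) :
    Separates G v w k' := by
  intro hr
  exact h (reach_mono (fun x hx => hx.imp id (Or.imp id fun h' => lt_of_le_of_lt hkk h')) hr)

theorem sep_symm {v w k : Fin n} (h : Separates G v w k) : Separates G w v k := by
  intro hr
  refine h (reach_symm (reach_mono ?_ hr))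
  intro x hx
  rcases hx with h1 | h1 | h1
  · exact Or.inr (Or.inl h1)
  · exact Or.inl h1
  · exact Or.inr (Or.inr h1)

theorem reach_out {v w k : Fin n}
    (hsep : ¬ ReachIn G {x | x = v ∨ x = w ∨ k < x} v w)
    (hreach : ReachIn G {x | x = v ∨ x = w ∨ k ≤ x} v w) :
    ReachIn G {x | x = w ∨ x = k ∨ k < x} k w := by
  have main : ∀ b, ReachIn G {x | x = v ∨ x = w ∨ k ≤ x} v b →
      ReachIn G {x | x = v ∨ x = w ∨ k < x} v b ∨
      ReachIn G {x | x = w ∨ x = k ∨ k < x} k b := by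
    intro b hb
    induction hb with
    | refl => exact Or.inl Relation.ReflTransGen.refl
    | @tail c b' _ hstep ih =>
      obtain ⟨hadj, _, hbT⟩ := hstep
      by_cases hbv : b' = v
      · subst hbv; exact Or.inl Relation.ReflTransGen.refl
      by_cases hbk : b' = k
      · subst hbk; exact Or.inr Relation.ReflTransGen.refl
      have hbw : b' = w ∨ k < b' := by
        rcases hbT with h1 | h1 | h1
        · exact absurd h1 hbv
        · exact Or.inl h1
        · exact Or.inr (lt_of_le_of_ne h1 (Ne.symm hbk))
      have hbS : b' ∈ {x : Fin n | x = v ∨ x = w ∨ k < x} := Or.inr hbw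
      have hbU : b' ∈ {x : Fin n | x = w ∨ x = k ∨ k < x} := by
        rcases hbw with h1 | h1
        · exact Or.inl h1
        · exact Or.inr (Or.inr h1)
      rcases ih with h | h
      · exact Or.inl (h.tail ⟨hadj, reach_mem h (Or.inl rfl), hbS⟩)
      · exact Or.inr (h.tail ⟨hadj, reach_mem h (Or.inr (Or.inl rfl)), hbU⟩)
  rcases main w hreach with h | h
  · exact absurd h hsep
  · exact h

theorem isStep_reach {v w k : Fin n} (h : IsStep G v w k) (hk : 0 < k.val) :
    ReachIn G {x | x = w ∨ x = k ∨ k < x} k w := by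
  obtain ⟨hsep, hmin⟩ := h
  have hk1 : (⟨k.val - 1, by omega⟩ : Fin n) < k := by
    rw [Fin.lt_def]; simp; omega
  have hr := hmin _ hk1
  rw [Separates, not_not] at hr
  have hset : {x : Fin n | x = v ∨ x = w ∨ (⟨k.val - 1, by omega⟩ : Fin n) < x}
      = {x : Fin n | x = v ∨ x = w ∨ k ≤ x} := by
    ext x
    simp only [Set.mem_setOf_eq, Fin.lt_def, Fin.le_def]
    omega
  rw [hset] at hr
  exact reach_out hsep hr

theorem isStep_reach_self {v w k : Fin n} (h : IsStep G v w k) (hk : 0 < k.val) :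
    ReachIn G {x | x = v ∨ x = k ∨ k < x} v k := by
  have h' : IsStep G w v k := ⟨sep_symm h.1, fun k' hk' hs => h.2 k' hk' (sep_symm hs)⟩
  exact reach_symm (isStep_reach h' hk)

theorem isStep_lt {v w k k₂ : Fin n} (h1 : IsStep G v w k) (hk : 0 < k.val)
    (h2 : IsStep G v k k₂) : k < k₂ := by
  by_contra hle
  push_neg at hle
  exact (sep_mono hle h2.1) (isStep_reach_self h1 hk)

end Lemmas
section ChainLemmas
variable {n : ℕ} {G : SimpleGraph (Fin n)}

theorem chain_zero {v b : Fin n} (hb : ∀ k' : Fin n, ¬ k' < b) :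
    ∀ {M : List (Fin n)}, List.Chain (IsStep G v) b M → Separates G v b b →
      (b :: M).getLast? = some b
  | [], _, _ => rfl
  | m :: M, hM, hs => by
    simp only [List.Chain, List.chain_cons] at hM
    obtain ⟨hbm, hM'⟩ := hM
    have hmb : m = b := by
      rcases (le_of_not_gt (hb m)).lt_or_eq with h | h
      · exact absurd hs (hbm.2 b h)
      · exact h.symm
    subst hmb
    rw [List.getLast?_cons_cons]
    exact chain_zero hb hM' hs

theorem chain_incr {v : Fin n} :
    ∀ {M : List (Fin n)} {a b z : Fin n}, IsStep G v a b → List.Chain (IsStep G v) b M →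
      (b :: M).getLast? = some z → G.Adj v z → List.Chain (· < ·) b M
  | [], _, _, _, _, _, _, _ => List.Chain.nil
  | m :: M, a, b, z, hab, hM, hlast, hadj => by
    simp only [List.Chain, List.chain_cons] at hM
    obtain ⟨hbm, hM'⟩ := hM
    rw [List.getLast?_cons_cons] at hlast
    have hblt : b < m := by
      rcases Nat.eq_zero_or_pos b.val with hb0 | hbpos
      · have hbmin : ∀ k' : Fin n, ¬ k' < b := by
          intro k' hk'
          rw [Fin.lt_def] at hk'
          omega
        by_contra hnot
        have hmb : m = b := by
          rcases (le_of_not_gt (hbmin m)).lt_or_eq with h | h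
          · exact absurd h hnot
          · exact h.symm
        rw [hmb] at hM' hbm hlast
        have hs : Separates G v b b := hbm.1
        have h0 := chain_zero hbmin hM' hs
        rw [h0] at hlast
        injection hlast with hzb
        rw [← hzb] at hadj
        exact hs (Relation.ReflTransGen.single ⟨hadj, Or.inl rfl, Or.inr (Or.inl rfl)⟩)
      · exact isStep_lt hab hbpos hbm
    exact List.Chain.cons hblt (chain_incr hbm hM' hlast hadj)

theorem chain_reach {v : Fin n} :
    ∀ {M : List (Fin n)} {m c z : Fin n}, List.Chain (IsStep G v) c (m :: M) →
      List.Chain (· < ·) m M → 0 < m.val → (m :: M).getLast? = some z →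
      ReachIn G {x | x = z ∨ x = c ∨ m ≤ x} z c
  | [], m, c, z, hch, _, hm, hlast => by
    simp only [List.Chain, List.chain_cons] at hch
    injection hlast with hzm
    subst hzm
    refine reach_mono ?_ (isStep_reach hch.1 hm)
    intro x hx
    rcases hx with h | h | h
    · exact Or.inr (Or.inl h)
    · exact Or.inl h
    · exact Or.inr (Or.inr (le_of_lt h))
  | m' :: M, m, c, z, hch, hinc, hm, hlast => by
    simp only [List.Chain] at hch
    rw [List.chain_cons] at hch
    obtain ⟨hcm, hch'⟩ := hch
    simp only [List.Chain] at hinc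
    rw [List.chain_cons] at hinc
    obtain ⟨hmm', hinc'⟩ := hinc
    rw [List.getLast?_cons_cons] at hlast
    have hm' : 0 < m'.val := by
      rw [Fin.lt_def] at hmm'; omega
    have ih := chain_reach hch' hinc' hm' hlast
    have r1 : ReachIn G {x | x = z ∨ x = c ∨ m ≤ x} z m := by
      refine reach_mono ?_ ih
      intro x hx
      rcases hx with h | h | h
      · exact Or.inl h
      · exact Or.inr (Or.inr (h.ge))
      · exact Or.inr (Or.inr (le_trans (le_of_lt hmm') h))
    have r2 : ReachIn G {x | x = z ∨ x = c ∨ m ≤ x} m c := by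
      refine reach_mono ?_ (isStep_reach hcm hm)
      intro x hx
      rcases hx with h | h | h
      · exact Or.inr (Or.inl h)
      · exact Or.inr (Or.inr (h.ge))
      · exact Or.inr (Or.inr (le_of_lt h))
    exact Relation.ReflTransGen.trans r1 r2

theorem chain_getLast_step {α : Type*} {R : α → α → Prop} :
    ∀ {q : List α} {t b z : α}, List.Chain R t (q ++ [b]) →
      (t :: q).getLast? = some z → R z b
  | [], t, b, z, hch, hlast => by
    simp only [List.nil_append, List.Chain, List.chain_cons] at hch
    injection hlast with hzt
    subst hzt
    exact hch.1
  | x :: q', t, b, z, hch, hlast => by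
    simp only [List.cons_append, List.Chain, List.chain_cons] at hch
    rw [List.getLast?_cons_cons] at hlast
    exact chain_getLast_step hch.2 hlast

end ChainLemmas
section SeqGTLemmas

theorem prefix_or_prefix {α : Type*} {l₁ l₂ l₃ : List α} (h1 : l₁ <+: l₃) (h2 : l₂ <+: l₃) :
    l₁ <+: l₂ ∨ l₂ <+: l₁ := by
  rcases le_total l₁.length l₂.length with h | h
  · left
    rw [List.prefix_iff_eq_take] at h1 h2
    rw [List.prefix_iff_eq_take, h2, List.take_take, min_eq_left h]
    exact h1
  · right
    rw [List.prefix_iff_eq_take] at h1 h2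
    rw [List.prefix_iff_eq_take, h1, List.take_take, min_eq_left h]
    exact h2

theorem prefix_of_prefix_le {α : Type*} {l₁ l₂ l₃ : List α} (h1 : l₁ <+: l₃) (h2 : l₂ <+: l₃)
    (h : l₁.length ≤ l₂.length) : l₁ <+: l₂ := by
  rcases prefix_or_prefix h1 h2 with h' | h'
  · exact h'
  · rw [h'.eq_of_length (le_antisymm h'.length_le h)]

theorem prefix_eq_of_length {α : Type*} {l₁ l₂ l₃ : List α} (h1 : l₁ <+: l₃) (h2 : l₂ <+: l₃)
    (h : l₁.length = l₂.length) : l₁ = l₂ :=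
  (prefix_of_prefix_le h1 h2 h.le).eq_of_length h

theorem prefix_trichotomy {α : Type*} : ∀ (L M : List α),
    L <+: M ∨ M <+: L ∨ ∃ (p : List α) (a b : α), a ≠ b ∧ p ++ [a] <+: L ∧ p ++ [b] <+: M
  | [], _ => Or.inl (List.nil_prefix)
  | _ :: _, [] => Or.inr (Or.inl (List.nil_prefix))
  | x :: L, y :: M => by
    by_cases hxy : x = y
    · subst hxy
      rcases prefix_trichotomy L M with h | h | ⟨p, a, b, hab, h1, h2⟩
      · exact Or.inl (List.cons_prefix_cons.2 ⟨rfl, h⟩)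
      · exact Or.inr (Or.inl (List.cons_prefix_cons.2 ⟨rfl, h⟩))
      · refine Or.inr (Or.inr ⟨x :: p, a, b, hab, ?_, ?_⟩)
        · rw [List.cons_append]
          exact List.cons_prefix_cons.2 ⟨rfl, h1⟩
        · rw [List.cons_append]
          exact List.cons_prefix_cons.2 ⟨rfl, h2⟩
    · refine Or.inr (Or.inr ⟨[], x, y, hxy, ?_, ?_⟩)
      · rw [List.nil_append]
        exact List.cons_prefix_cons.2 ⟨rfl, List.nil_prefix⟩
      · rw [List.nil_append]
        exact List.cons_prefix_cons.2 ⟨rfl, List.nil_prefix⟩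

theorem seqGT_irrefl {α : Type*} [LinearOrder α] (L : List α) : ¬ SeqGT L L := by
  rintro (⟨_, hne⟩ | ⟨p, a, b, hba, h1, h2⟩)
  · exact hne rfl
  · have heq : p ++ [a] = p ++ [b] := prefix_eq_of_length h1 h2 (by simp)
    have hab : a = b := by simpa using (List.append_inj heq rfl).2
    subst hab
    exact lt_irrefl a hba

theorem seqGT_trans {α : Type*} [LinearOrder α] {X Y Z : List α}
    (h1 : SeqGT X Y) (h2 : SeqGT Y Z) : SeqGT X Z := by
  rcases h1 with ⟨hXY, hne1⟩ | ⟨p, a, b, hba, hpa, hpb⟩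
  · rcases h2 with ⟨hYZ, hne2⟩ | ⟨q, c, d, hdc, hqc, hqd⟩
    · refine Or.inl ⟨hXY.trans hYZ, ?_⟩
      rintro rfl
      exact hne1 (hXY.eq_of_length (le_antisymm hXY.length_le hYZ.length_le))
    · have hqY : q <+: Y := (List.prefix_append q [c]).trans hqc
      rcases le_or_gt X.length q.length with h | h
      · have hXq : X <+: q := prefix_of_prefix_le hXY hqY h
        refine Or.inl ⟨hXq.trans ((List.prefix_append q [d]).trans hqd), ?_⟩
        have hlen := hqd.length_le
        rw [List.length_append] at hlen
        rintro rfl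
        simp at hlen
        omega
      · have hqcX : q ++ [c] <+: X := by
          refine prefix_of_prefix_le hqc hXY ?_
          rw [List.length_append]
          simpa using h
        exact Or.inr ⟨q, c, d, hdc, hqcX, hqd⟩
  · rcases h2 with ⟨hYZ, hne2⟩ | ⟨q, c, d, hdc, hqc, hqd⟩
    · exact Or.inr ⟨p, a, b, hba, hpa, hpb.trans hYZ⟩
    · rcases lt_trichotomy p.length q.length with h | h | h
      · have hpbq : p ++ [b] <+: q := by
          refine prefix_of_prefix_le hpb ((List.prefix_append q [c]).trans hqc) ?_
          rw [List.length_append]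
          simpa using h
        exact Or.inr ⟨p, a, b, hba, hpa,
          (hpbq.trans (List.prefix_append q [d])).trans hqd⟩
      · have heq : p ++ [b] = q ++ [c] := prefix_eq_of_length hpb hqc (by simp [h])
        obtain ⟨hpq, hbc⟩ := List.append_inj heq h
        have hbc' : b = c := by simpa using hbc
        subst hpq
        subst hbc'
        exact Or.inr ⟨p, a, d, lt_trans hdc hba, hpa, hqd⟩
      · have hqcp : q ++ [c] <+: p := by
          refine prefix_of_prefix_le hqc ((List.prefix_append p [b]).trans hpb) ?_
          rw [List.length_append]
          simpa using h
        exact Or.inr ⟨q, c, d, hdc, (hqcp.trans (List.prefix_append p [a])).trans hpa, hqd⟩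

end SeqGTLemmas

section Unique
variable {n : ℕ} {G : SimpleGraph (Fin n)}

theorem isStep_unique {v w k k' : Fin n} (h : IsStep G v w k) (h' : IsStep G v w k') : k = k' := by
  rcases lt_trichotomy k k' with hl | he | hl
  · exact absurd h.1 (h'.2 k hl)
  · exact he
  · exact absurd h'.1 (h.2 k' hl)

theorem chain_prefix {v : Fin n} : ∀ (M₁ M₂ : List (Fin n)) (c : Fin n),
    List.Chain (IsStep G v) c M₁ → List.Chain (IsStep G v) c M₂ → M₁ <+: M₂ ∨ M₂ <+: M₁
  | [], _, _, _, _ => Or.inl List.nil_prefix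
  | _ :: _, [], _, _, _ => Or.inr List.nil_prefix
  | m₁ :: M₁, m₂ :: M₂, c, h1, h2 => by
    simp only [List.Chain, List.chain_cons] at h1 h2
    have hm : m₁ = m₂ := isStep_unique h1.1 h2.1
    subst hm
    rcases chain_prefix M₁ M₂ m₁ h1.2 h2.2 with h | h
    · exact Or.inl (List.cons_prefix_cons.2 ⟨rfl, h⟩)
    · exact Or.inr (List.cons_prefix_cons.2 ⟨rfl, h⟩)

theorem destSeq_prefix_eq {t v : Fin n} {L₁ L₂ : List (Fin n)}
    (h1 : IsDestSeq G t v L₁) (h2 : IsDestSeq G t v L₂) (hp : L₁ <+: L₂) : L₁ = L₂ := by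
  by_contra hne
  obtain ⟨s, hs⟩ := hp
  obtain ⟨⟨r₁, rfl, _⟩, _, hadj1⟩ := h1
  obtain ⟨_, hdrop2, _⟩ := h2
  have hsne : s ≠ [] := by
    rintro rfl
    rw [List.append_nil] at hs
    exact hne hs
  have hz : (t :: r₁).getLast? = some ((t :: r₁).getLast (List.cons_ne_nil _ _)) :=
    List.getLast?_eq_getLast _
  have hadj := hadj1 _ hz
  have hzmem : (t :: r₁).getLast (List.cons_ne_nil _ _) ∈ L₂.dropLast := by
    rw [← hs, List.dropLast_append_of_ne_nil hsne]
    exact List.mem_append_left _ (List.getLast_mem _)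
  exact hdrop2 _ hzmem hadj

theorem destSeq_unique {t v : Fin n} {L₁ L₂ : List (Fin n)}
    (h1 : IsDestSeq G t v L₁) (h2 : IsDestSeq G t v L₂) : L₁ = L₂ := by
  obtain ⟨r₁, hr₁, hc₁⟩ := h1.1
  obtain ⟨r₂, hr₂, hc₂⟩ := h2.1
  have : L₁ <+: L₂ ∨ L₂ <+: L₁ := by
    rw [hr₁, hr₂]
    rcases chain_prefix r₁ r₂ t hc₁ hc₂ with h | h
    · exact Or.inl (List.cons_prefix_cons.2 ⟨rfl, h⟩)
    · exact Or.inr (List.cons_prefix_cons.2 ⟨rfl, h⟩)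
  rcases this with h | h
  · exact destSeq_prefix_eq h1 h2 h
  · exact (destSeq_prefix_eq h2 h1 h).symm

theorem chain'_transGen {α : Type*} {R : α → α → Prop} :
    ∀ {l : List α} {x y : α}, List.Chain' R (x :: l) → y ∈ l → Relation.TransGen R x y
  | [], _, _, _, h => absurd h List.not_mem_nil
  | z :: l', x, y, hc, hy => by
    simp only [List.Chain', List.isChain_cons_cons] at hc
    rcases List.mem_cons.1 hy with rfl | hy'
    · exact Relation.TransGen.single hc.1
    · exact (chain'_transGen hc.2 hy').head hc.1

end Unique


/-- In the undirected-connectivity algorithm: if `u'` is the vertex the algorithm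
moves to from `u` (`u'` adjacent to `u` and equal to the last entry of `u`'s
destination sequence), then the destination sequence of `u'` is strictly greater
than that of `u`; consequently the algorithm never visits the same vertex twice. -/
theorem destination_sequence_increases {n : ℕ} (G : SimpleGraph (Fin n)) (t : Fin n) :
    (∀ (u u' : Fin n) (L L' : List (Fin n)),
        IsDestSeq G t u L → IsDestSeq G t u' L' → L.getLast? = some u' →
        SeqGT L' L) ∧
    (∀ P : List (Fin n),
        P.Chain' (fun a b => ∃ L, IsDestSeq G t a L ∧ L.getLast? = some b) →
        P.Nodup) := by
  have part1 : ∀ (u u' : Fin n) (L L' : List (Fin n)),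
      IsDestSeq G t u L → IsDestSeq G t u' L' → L.getLast? = some u' → SeqGT L' L := by
    intro u u' L L' hLfull hL'full hlast
    obtain ⟨⟨rest, rfl, hchain⟩, hdrop, hadjL⟩ := hLfull
    obtain ⟨⟨rest', rfl, hchain'⟩, hdrop', hadjL'⟩ := hL'full
    rcases prefix_trichotomy (t :: rest') (t :: rest) with hpre | hpre | ⟨p, a, b, hab, h1, h2⟩
    · refine Or.inl ⟨hpre, ?_⟩
      intro heq
      exact G.loopless.irrefl u' (hadjL' u' (heq ▸ hlast))
    · obtain ⟨ext, hext⟩ := hpre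
      cases ext with
      | nil =>
        rw [List.append_nil] at hext
        refine Or.inl ⟨hext ▸ List.prefix_refl _, ?_⟩
        intro heq
        exact G.loopless.irrefl u' (hadjL' u' (hext ▸ hlast))
      | cons d s =>
        exfalso
        have hrest' : rest' = rest ++ d :: s := by
          rw [List.cons_append] at hext
          injection hext with _ h
          exact h.symm
        rw [hrest'] at hchain'
        have hsplit := List.isChain_cons_split.1 hchain'
        have hstep := chain_getLast_step hsplit.1 hlast
        exact hstep.1 Relation.ReflTransGen.refl
    · cases p with
      | nil =>
        exfalso
        rw [List.nil_append] at h1 h2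
        have ha : a = t := (List.cons_prefix_cons.1 h1).1
        have hb : b = t := (List.cons_prefix_cons.1 h2).1
        exact hab (ha.trans hb.symm)
      | cons t₀ q =>
        rw [List.cons_append] at h1 h2
        obtain ⟨ht₀, h1'⟩ := List.cons_prefix_cons.1 h1
        obtain ⟨_, h2'⟩ := List.cons_prefix_cons.1 h2
        clear ht₀
        obtain ⟨rs', hrs'⟩ := h1'
        obtain ⟨rs, hrs⟩ := h2'
        have hrest : rest = q ++ b :: rs := by
          rw [← hrs, List.append_assoc, List.singleton_append]
        have hrest' : rest' = q ++ a :: rs' := by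
          rw [← hrs', List.append_assoc, List.singleton_append]
        subst hrest
        subst hrest'
        have hsplitb := List.isChain_cons_split.1 hchain
        have hsplita := List.isChain_cons_split.1 hchain'
        obtain ⟨cj, hcj⟩ : ∃ cj, (t :: q).getLast? = some cj :=
          ⟨_, List.getLast?_eq_getLast (List.cons_ne_nil _ _)⟩
        have hstepa : IsStep G u' cj a := chain_getLast_step hsplita.1 hcj
        have hstepb : IsStep G u cj b := chain_getLast_step hsplitb.1 hcj
        have hlast' : (b :: rs).getLast? = some u' := by
          have hsp : t :: (q ++ b :: rs) = (t :: q) ++ (b :: rs) := by simp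
          rw [hsp, List.getLast?_append] at hlast
          cases hbz : (b :: rs).getLast? with
          | none => exact absurd hbz (by simp)
          | some z =>
            rw [hbz] at hlast
            simpa using hlast
        have hadj : G.Adj u u' := hadjL u' hlast
        have hblea : b ≤ a := by
          rcases Nat.eq_zero_or_pos b.val with hb0 | hbpos
          · rw [Fin.le_def]
            omega
          · by_contra hlt
            push_neg at hlt
            have hchaincons : List.Chain (IsStep G u) cj (b :: rs) :=
              List.chain_cons.2 ⟨hstepb, hsplitb.2⟩
            have hincr : List.Chain (· < ·) b rs :=
              chain_incr hstepb hsplitb.2 hlast' hadj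
            have hreach := chain_reach hchaincons hincr hbpos hlast'
            refine hstepa.1 (reach_mono ?_ hreach)
            intro x hx
            rcases hx with h | h | h
            · exact Or.inl h
            · exact Or.inr (Or.inl h)
            · exact Or.inr (Or.inr (lt_of_lt_of_le hlt h))
        have hblt : b < a := lt_of_le_of_ne hblea (Ne.symm hab)
        refine Or.inr ⟨t :: q, a, b, hblt, ?_, ?_⟩
        · rw [List.cons_append]
          exact List.cons_prefix_cons.2 ⟨rfl, ⟨rs', by rw [List.append_assoc, List.singleton_append]⟩⟩
        · rw [List.cons_append]
          exact List.cons_prefix_cons.2 ⟨rfl, ⟨rs, by rw [List.append_assoc, List.singleton_append]⟩⟩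
  refine ⟨part1, ?_⟩
  intro P
  induction P with
  | nil => intro _; exact List.nodup_nil
  | cons a P' ih =>
    intro hP
    have key : ∀ {x y : Fin n},
        Relation.TransGen (fun a b => ∃ L, IsDestSeq G t a L ∧ L.getLast? = some b) x y →
        ∀ Ly, IsDestSeq G t y Ly → ∃ Lx, IsDestSeq G t x Lx ∧ SeqGT Ly Lx := by
      intro x y htg
      induction htg with
      | single h =>
        intro Ly hLy
        obtain ⟨L, hL, hl⟩ := h
        exact ⟨L, hL, part1 _ _ _ _ hL hLy hl⟩
      | tail htg' hby ih' =>
        intro Ly hLy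
        obtain ⟨Lb, hLb, hlb⟩ := hby
        have hgt : SeqGT Ly Lb := part1 _ _ _ _ hLb hLy hlb
        obtain ⟨Lx, hLx, hgt'⟩ := ih' Lb hLb
        exact ⟨Lx, hLx, seqGT_trans hgt hgt'⟩
    rw [List.nodup_cons]
    refine ⟨?_, ih hP.tail⟩
    intro hmem
    have htg := chain'_transGen hP hmem
    obtain ⟨z, P'', rfl⟩ : ∃ z P'', P' = z :: P'' := by
      cases P' with
      | nil => exact absurd hmem List.not_mem_nil
      | cons z P'' => exact ⟨z, P'', rfl⟩
    have hRaz := (List.isChain_cons_cons.1 hP).1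
    obtain ⟨La, hLa, _⟩ := hRaz
    obtain ⟨Lx, hLx, hgt⟩ := key htg La hLa
    rw [destSeq_unique hLx hLa] at hgt
    exact seqGT_irrefl _ hgt
end
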